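/- Let G(x,y) and H(z,t) be irreducible non-constant polynomials, and let f ∈ C[x,y,z,t]. If every common zero of G and H in C^4 is a zero of f, then f belongs to the ideal (G,H) in C[x,y,z,t]. -/

import Mathlib

open MvPolynomial

/-- Embedding of the variables `x, y` into `ℂ[x,y,z,t]`. -/
noncomputable def embXY : MvPolynomial (Fin 2) ℂ →+* MvPolynomial (Fin 4) ℂ :=
  (MvPolynomial.rename (![0, 1] : Fin 2 → Fin 4)).toRingHom

/-- Embedding of the variables `z, t` into `ℂ[x,y,z,t]`. -/
noncomputable def embZT : MvPolynomial (Fin 2) ℂ →+* MvPolynomial (Fin 4) ℂ :=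
  (MvPolynomial.rename (![2, 3] : Fin 2 → Fin 4)).toRingHom

section NSAux

noncomputable section

/-- Coefficient-wise application of a `ℂ`-linear functional. -/
def Lmap (ℓ : MvPolynomial (Fin 2) ℂ →ₗ[ℂ] ℂ)
    (F : MvPolynomial (Fin 2) (MvPolynomial (Fin 2) ℂ)) : MvPolynomial (Fin 2) ℂ :=
  ∑ m ∈ F.support, monomial m (ℓ (coeff m F))

theorem coeff_Lmap (ℓ : MvPolynomial (Fin 2) ℂ →ₗ[ℂ] ℂ)
    (F : MvPolynomial (Fin 2) (MvPolynomial (Fin 2) ℂ)) (m : Fin 2 →₀ ℕ) :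
    coeff m (Lmap ℓ F) = ℓ (coeff m F) := by
  classical
  rw [Lmap, coeff_sum]
  simp only [coeff_monomial]
  rw [Finset.sum_ite_eq' F.support m (fun m' => ℓ (coeff m' F))]
  split_ifs with h
  · rfl
  · rw [MvPolynomial.notMem_support_iff.mp h, map_zero]

theorem eval_Lmap (ℓ : MvPolynomial (Fin 2) ℂ →ₗ[ℂ] ℂ)
    (F : MvPolynomial (Fin 2) (MvPolynomial (Fin 2) ℂ)) (q : Fin 2 → ℂ) :
    eval q (Lmap ℓ F)
      = ℓ (aeval (R := MvPolynomial (Fin 2) ℂ) (fun i => C (q i)) F) := by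
  classical
  have hsupp : (Lmap ℓ F).support ⊆ F.support := by
    intro m hm
    rw [MvPolynomial.mem_support_iff] at hm ⊢
    intro h0
    exact hm (by rw [coeff_Lmap, h0, map_zero])
  rw [eval_eq' q (Lmap ℓ F), Finset.sum_subset hsupp
    (fun m _ hm => by rw [MvPolynomial.notMem_support_iff.mp hm, zero_mul])]
  rw [aeval_def, eval₂_eq']
  rw [map_sum]
  refine Finset.sum_congr rfl fun m _ => ?_
  rw [coeff_Lmap]
  have : algebraMap (MvPolynomial (Fin 2) ℂ) (MvPolynomial (Fin 2) ℂ) (coeff m F)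
        * ∏ i, C (q i) ^ m i
      = (∏ i, q i ^ m i) • coeff m F := by
    rw [Algebra.algebraMap_self, RingHom.id_apply]
    rw [show (∏ i, (C (q i) : MvPolynomial (Fin 2) ℂ) ^ m i) = C (∏ i, q i ^ m i) by
      rw [map_prod]; simp]
    rw [Algebra.smul_def, algebraMap_eq, mul_comm]
  rw [this, map_smul, smul_eq_mul, mul_comm]


theorem prime_of_irreducible_rename {f : Fin 2 → Fin 4} (hf : Function.Injective f)
    {p : MvPolynomial (Fin 2) ℂ} (h : Irreducible (rename f p)) : Prime p := by
  classical
  have hirr : Irreducible p := by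
    refine ⟨fun hu => h.not_isUnit (hu.map _), fun a b hab => ?_⟩
    rcases h.isUnit_or_isUnit (by rw [hab, map_mul]) with h' | h'
    · left
      have := h'.map (killCompl hf)
      rwa [killCompl_rename_app] at this
    · right
      have := h'.map (killCompl hf)
      rwa [killCompl_rename_app] at this
  exact hirr.prime

theorem mem_span_of_vanishing_aux {p0 : MvPolynomial (Fin 2) ℂ} (hp : Prime p0)
    (g : MvPolynomial (Fin 2) ℂ) (h : ∀ q : Fin 2 → ℂ, eval q p0 = 0 → eval q g = 0) :
    g ∈ Ideal.span {p0} := by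
  have hmem : g ∈ vanishingIdeal ℂ (zeroLocus ℂ (Ideal.span {p0})) := by
    rw [mem_vanishingIdeal_iff]
    intro q hq
    exact h q (hq p0 (Ideal.subset_span rfl))
  rw [vanishingIdeal_zeroLocus_eq_radical] at hmem
  rwa [Ideal.IsPrime.radical ((Ideal.span_singleton_prime hp.ne_zero).mpr hp)] at hmem

theorem mem_span_C_of_coeff (G0 : MvPolynomial (Fin 2) ℂ)
    (F : MvPolynomial (Fin 2) (MvPolynomial (Fin 2) ℂ))
    (h : ∀ m, coeff m F ∈ Ideal.span {G0}) :
    F ∈ Ideal.span ({C G0} : Set (MvPolynomial (Fin 2) (MvPolynomial (Fin 2) ℂ))) := by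
  rw [F.as_sum]
  refine Ideal.sum_mem _ fun m _ => ?_
  obtain ⟨a, ha⟩ := Ideal.mem_span_singleton'.mp (h m)
  rw [Ideal.mem_span_singleton]
  exact ⟨monomial m a, by rw [C_mul_monomial, ← ha, mul_comm]⟩


end

end NSAux

/-- If `G(x,y)` and `H(z,t)` are irreducible and non-constant, and every common zero of
`G` and `H` in `ℂ⁴` is a zero of `f`, then `f ∈ (G, H)` in `ℂ[x,y,z,t]`. -/
theorem mem_span_of_vanishing_on_common_zeros
    (G0 H0 : MvPolynomial (Fin 2) ℂ) (f : MvPolynomial (Fin 4) ℂ)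
    (hGirr : Irreducible (embXY G0)) (hHirr : Irreducible (embZT H0))
    (hGnc : ∀ c : ℂ, G0 ≠ MvPolynomial.C c) (hHnc : ∀ c : ℂ, H0 ≠ MvPolynomial.C c)
    (hvan : ∀ p : Fin 4 → ℂ,
      MvPolynomial.eval p (embXY G0) = 0 → MvPolynomial.eval p (embZT H0) = 0 →
      MvPolynomial.eval p f = 0) :
    f ∈ (Ideal.span {embXY G0, embZT H0} : Ideal (MvPolynomial (Fin 4) ℂ)) := by
  classical
  have hGp : Prime G0 :=
    prime_of_irreducible_rename (f := ![0,1]) (by decide) hGirr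
  have hHp : Prime H0 :=
    prime_of_irreducible_rename (f := ![2,3]) (by decide) hHirr
  let Ψ : MvPolynomial (Fin 4) ℂ →ₐ[ℂ] MvPolynomial (Fin 2) (MvPolynomial (Fin 2) ℂ) :=
    aeval ![C (X 0), C (X 1), X 0, X 1]
  set F : MvPolynomial (Fin 2) (MvPolynomial (Fin 2) ℂ) := Ψ f with hF
  -- Step 1
  have step1 : ∀ q : Fin 2 → ℂ, eval q H0 = 0 →
      (aeval (R := MvPolynomial (Fin 2) ℂ) (fun i => C (q i)) F : MvPolynomial (Fin 2) ℂ) ∈ Ideal.span {G0} := by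
    intro q hq
    refine mem_span_of_vanishing_aux hGp _ fun p hp => ?_
    have key : eval p (aeval (R := MvPolynomial (Fin 2) ℂ) (fun i => C (q i)) F)
        = eval ![p 0, p 1, q 0, q 1] f := by
      have : ((eval p).comp
          (((aeval (R := MvPolynomial (Fin 2) ℂ) (fun i => C (q i)) : MvPolynomial (Fin 2) (MvPolynomial (Fin 2) ℂ) →ₐ[MvPolynomial (Fin 2) ℂ] MvPolynomial (Fin 2) ℂ) :
            MvPolynomial (Fin 2) (MvPolynomial (Fin 2) ℂ) →+* MvPolynomial (Fin 2) ℂ).comp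
            (Ψ : MvPolynomial (Fin 4) ℂ →+* MvPolynomial (Fin 2) (MvPolynomial (Fin 2) ℂ))))
          = eval ![p 0, p 1, q 0, q 1] := by
        apply ringHom_ext
        · intro c
          simp [Ψ]
        · intro i
          fin_cases i <;> simp [Ψ, rename_X]
      exact RingHom.congr_fun this f
    rw [key]
    apply hvan
    · show eval _ (rename ![0,1] G0) = 0
      rw [eval_rename]
      have he : ![p 0, p 1, q 0, q 1] ∘ ![0,1] = p := by
        funext i; fin_cases i <;> rfl
      rw [he]; exact hp
    · show eval _ (rename ![2,3] H0) = 0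
      rw [eval_rename]
      have he : ![p 0, p 1, q 0, q 1] ∘ ![2,3] = q := by
        funext i; fin_cases i <;> rfl
      rw [he]; exact hq
  -- decomposition setup
  set I : Submodule ℂ (MvPolynomial (Fin 2) ℂ) := (Ideal.span {G0}).restrictScalars ℂ with hI
  obtain ⟨W, hW⟩ := Submodule.exists_isCompl I
  let πI : MvPolynomial (Fin 2) ℂ →ₗ[ℂ] I := Submodule.projectionOnto I W hW
  let πW : MvPolynomial (Fin 2) ℂ →ₗ[ℂ] W := Submodule.projectionOnto W I hW.symm
  have hsum : ∀ a : MvPolynomial (Fin 2) ℂ, ((πI a : MvPolynomial (Fin 2) ℂ) + (πW a : MvPolynomial (Fin 2) ℂ)) = a := fun a =>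
    Submodule.projection_add_projection_eq_self hW a
  let b : Module.Basis (Module.Basis.ofVectorSpaceIndex ℂ W) ℂ W := Module.Basis.ofVectorSpace ℂ W
  let ℓ : Module.Basis.ofVectorSpaceIndex ℂ W → (MvPolynomial (Fin 2) ℂ →ₗ[ℂ] ℂ) := fun j => (b.coord j).comp πW
  have hℓI : ∀ j, ∀ a ∈ Ideal.span {G0}, ℓ j a = 0 := by
    intro j a ha
    have : πW a = 0 := Submodule.projectionOnto_apply_of_mem_right hW.symm ha
    simp [ℓ, this]
  have hLj : ∀ j, Lmap (ℓ j) F ∈ Ideal.span {H0} := by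
    intro j
    refine mem_span_of_vanishing_aux hHp _ fun q hq => ?_
    rw [eval_Lmap]
    exact hℓI j _ (step1 q hq)
  -- finite index set
  set T : Finset (Module.Basis.ofVectorSpaceIndex ℂ W) :=
    F.support.biUnion (fun m => (b.repr (πW (coeff m F))).support) with hT
  -- reconstruction of the projection to W from the basis
  have sum_repr : ∀ (x : W) (s : Finset (Module.Basis.ofVectorSpaceIndex ℂ W)),
      (b.repr x).support ⊆ s → ∑ j ∈ s, (b.repr x) j • ((b j : W) : MvPolynomial (Fin 2) ℂ) = (x : MvPolynomial (Fin 2) ℂ) := by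
    intro x s hs
    rw [← Finset.sum_subset hs (fun j _ hj => by
      rw [Finsupp.notMem_support_iff.mp hj, zero_smul])]
    have : (∑ j ∈ (b.repr x).support, (b.repr x) j • (b j)) = x := by
      conv_rhs => rw [← b.linearCombination_repr x]
      rw [Finsupp.linearCombination_apply, Finsupp.sum]
    calc ∑ j ∈ (b.repr x).support, (b.repr x) j • ((b j : W) : MvPolynomial (Fin 2) ℂ)
        = ((∑ j ∈ (b.repr x).support, (b.repr x) j • (b j) : W) : MvPolynomial (Fin 2) ℂ) := by
          push_cast; rfl
      _ = (x : MvPolynomial (Fin 2) ℂ) := by rw [this]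
  -- the decomposition
  have decomp : F = (∑ m ∈ F.support, monomial m ((πI (coeff m F) : MvPolynomial (Fin 2) ℂ)))
      + ∑ j ∈ T, (map C (Lmap (ℓ j) F)) * C ((b j : W) : MvPolynomial (Fin 2) ℂ) := by
    apply MvPolynomial.ext
    intro m
    rw [coeff_add, coeff_sum, coeff_sum]
    have h1 : ∑ m' ∈ F.support, coeff m (monomial m' ((πI (coeff m' F) : MvPolynomial (Fin 2) ℂ)))
        = (πI (coeff m F) : MvPolynomial (Fin 2) ℂ) := by
      simp only [coeff_monomial]
      rw [Finset.sum_ite_eq' F.support m (fun m' => (πI (coeff m' F) : MvPolynomial (Fin 2) ℂ))]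
      split_ifs with h
      · rfl
      · rw [MvPolynomial.notMem_support_iff.mp h]
        simp
    have h2 : ∑ j ∈ T, coeff m ((map C (Lmap (ℓ j) F)) * C ((b j : W) : MvPolynomial (Fin 2) ℂ))
        = ((πW (coeff m F) : W) : MvPolynomial (Fin 2) ℂ) := by
      have hterm : ∀ j, coeff m ((map C (Lmap (ℓ j) F)) * C ((b j : W) : MvPolynomial (Fin 2) ℂ))
          = (b.repr (πW (coeff m F))) j • ((b j : W) : MvPolynomial (Fin 2) ℂ) := by
        intro j
        rw [mul_comm, coeff_C_mul, coeff_map, coeff_Lmap]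
        show _ * C ((b.coord j) (πW (coeff m F))) = _
        rw [Module.Basis.coord_apply, mul_comm, ← algebraMap_eq, ← Algebra.smul_def]
      rw [Finset.sum_congr rfl fun j _ => hterm j]
      by_cases hm : m ∈ F.support
      · exact sum_repr _ _ (fun j hj => Finset.mem_biUnion.mpr ⟨m, hm, hj⟩)
      · rw [MvPolynomial.notMem_support_iff.mp hm]
        simp
    rw [h1, h2, hsum]
  -- F lies in the span
  have hFmem : F ∈ Ideal.span ({C G0, map C H0} : Set (MvPolynomial (Fin 2) (MvPolynomial (Fin 2) ℂ))) := by
    rw [decomp]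
    refine Ideal.add_mem _ ?_ (Ideal.sum_mem _ fun j _ => ?_)
    · have : (∑ m ∈ F.support, monomial m ((πI (coeff m F) : MvPolynomial (Fin 2) ℂ)))
          ∈ Ideal.span ({C G0} : Set (MvPolynomial (Fin 2) (MvPolynomial (Fin 2) ℂ))) := by
        refine Ideal.sum_mem _ fun m _ => ?_
        have hmem : ((πI (coeff m F)) : MvPolynomial (Fin 2) ℂ) ∈ Ideal.span {G0} := (πI (coeff m F)).2
        obtain ⟨a, ha⟩ := Ideal.mem_span_singleton'.mp hmem
        rw [Ideal.mem_span_singleton]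
        exact ⟨monomial m a, by rw [C_mul_monomial, ← ha, mul_comm]⟩
      exact Ideal.span_mono (Set.singleton_subset_iff.mpr (Set.mem_insert _ _)) this
    · have hdvd : map C H0 ∣ map C (Lmap (ℓ j) F) :=
        map_dvd (map C : MvPolynomial (Fin 2) ℂ →+* MvPolynomial (Fin 2) (MvPolynomial (Fin 2) ℂ))
          (Ideal.mem_span_singleton.mp (hLj j))
      refine Ideal.mul_mem_right _ _ ?_
      refine Ideal.span_mono (Set.singleton_subset_iff.mpr ?_)
        (Ideal.mem_span_singleton.mpr hdvd)
      exact Set.mem_insert_of_mem _ rfl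
  -- pull back
  obtain ⟨P, Q, hPQ⟩ := Ideal.mem_span_pair.mp hFmem
  let Θ : MvPolynomial (Fin 2) (MvPolynomial (Fin 2) ℂ) →+* MvPolynomial (Fin 4) ℂ :=
    eval₂Hom embXY ![X 2, X 3]
  have hΘΨ : Θ F = f := by
    have : Θ.comp (Ψ : MvPolynomial (Fin 4) ℂ →+* MvPolynomial (Fin 2) (MvPolynomial (Fin 2) ℂ))
        = RingHom.id _ := by
      apply ringHom_ext
      · intro c
        simp [Θ, Ψ, embXY]
      · intro i
        fin_cases i <;> simp [Θ, Ψ, embXY, rename_X]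
    exact RingHom.congr_fun this f
  have hΘC : Θ (C G0) = embXY G0 := by simp [Θ]
  have hΘH : Θ (map C H0) = embZT H0 := by
    rw [show Θ (map C H0) = eval₂ (embXY.comp C) ![X 2, X 3] H0 from eval₂_map C ![X 2, X 3] embXY H0]
    have h1 : embXY.comp (C : ℂ →+* MvPolynomial (Fin 2) ℂ) = (C : ℂ →+* MvPolynomial (Fin 4) ℂ) :=
      RingHom.ext fun c => rename_C _ c
    rw [h1]
    show _ = rename ![2,3] H0
    rw [rename_eq_aeval, aeval_def, algebraMap_eq]
    congr 1
    funext i; fin_cases i <;> rfl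
  rw [Ideal.mem_span_pair]
  refine ⟨Θ P, Θ Q, ?_⟩
  rw [← hΘC, ← hΘH, ← map_mul, ← map_mul, ← map_add, hPQ, hΘΨ]
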